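/- The proposed influence-type function has mean zero at the true parameter value: if every function ω ↦ U k (X ω) (k ∈ Fin K) is integrable and 𝔼[U(Y, X)] = 0, then 𝔼[φ(Y*, X)] = 0, where φ i x = Σ_k (P⁻¹) k i • U k x. -/

import Mathlib

open MeasureTheory Finset

/-- The proposed influence-type function has mean zero at the true parameter value:
if `𝔼[U(Y, X)] = 0`, then `𝔼[φ(Y*, X)] = 0`, where `φ i x = ∑ k, (P⁻¹) k i • U k x`. -/
theorem pram_influence_mean_zero {Ω 𝒳 : Type*} [MeasurableSpace Ω] [MeasurableSpace 𝒳]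
    (μ : Measure Ω) [IsProbabilityMeasure μ] {K d : ℕ}
    (Y Ystar : Ω → Fin K) (X : Ω → 𝒳)
    (hY : Measurable Y) (hYstar : Measurable Ystar) (hX : Measurable X)
    (P : Matrix (Fin K) (Fin K) ℝ) (hP : IsUnit P.det)
    (hpram : ∀ (i j : Fin K) (A : Set 𝒳), MeasurableSet A →
      (μ {ω | Ystar ω = i ∧ Y ω = j ∧ X ω ∈ A}).toReal
        = P i j * (μ {ω | Y ω = j ∧ X ω ∈ A}).toReal)
    (U : Fin K → 𝒳 → (Fin d → ℝ)) (hU : ∀ k, Measurable (U k))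
    (hUint : ∀ k : Fin K, Integrable (fun ω => U k (X ω)) μ)
    (hmean : ∫ ω, U (Y ω) (X ω) ∂μ = 0)
    (φ : Fin K → 𝒳 → (Fin d → ℝ))
    (hφ : ∀ i x, φ i x = ∑ k : Fin K, P⁻¹ k i • U k x) :
    ∫ ω, φ (Ystar ω) (X ω) ∂μ = 0 := by
  classical
  -- measurability of basic sets
  have hSj : ∀ j : Fin K, MeasurableSet {ω | Y ω = j} := fun j => hY (MeasurableSet.singleton j)
  have hSij : ∀ i j : Fin K, MeasurableSet {ω | Ystar ω = i ∧ Y ω = j} := by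
    intro i j
    have := (hYstar (MeasurableSet.singleton i)).inter (hY (MeasurableSet.singleton j))
    convert this using 1
    rfl
  -- key lemma
  have key : ∀ i j k : Fin K,
      ∫ ω in {ω | Ystar ω = i ∧ Y ω = j}, U k (X ω) ∂μ
        = P i j • ∫ ω in {ω | Y ω = j}, U k (X ω) ∂μ := by
    intro i j k
    by_cases h0 : μ {ω | Y ω = j} = 0
    · have h1 : μ {ω | Ystar ω = i ∧ Y ω = j} = 0 :=
        measure_mono_null (fun ω hω => hω.2) h0
      rw [Measure.restrict_eq_zero.mpr h0, Measure.restrict_eq_zero.mpr h1]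
      simp
    · have hfin : μ {ω | Y ω = j} ≠ ⊤ := measure_ne_top μ _
      have htpos : 0 < (μ {ω | Y ω = j}).toReal := ENNReal.toReal_pos h0 hfin
      have hp0 : 0 ≤ P i j := by
        have h := hpram i j Set.univ MeasurableSet.univ
        simp only [Set.mem_univ, and_true] at h
        nlinarith [ENNReal.toReal_nonneg (a := μ {ω | Ystar ω = i ∧ Y ω = j})]
      have hmap : (μ.restrict {ω | Ystar ω = i ∧ Y ω = j}).map X
          = (ENNReal.ofReal (P i j)) • ((μ.restrict {ω | Y ω = j}).map X) := by
        ext A hA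
        rw [Measure.smul_apply, Measure.map_apply hX hA, Measure.map_apply hX hA,
          Measure.restrict_apply (hX hA), Measure.restrict_apply (hX hA)]
        have h := hpram i j A hA
        have e1 : {ω | Ystar ω = i ∧ Y ω = j ∧ X ω ∈ A}
            = X ⁻¹' A ∩ {ω | Ystar ω = i ∧ Y ω = j} := by
          ext ω; simp only [Set.mem_setOf_eq, Set.mem_inter_iff, Set.mem_preimage]; tauto
        have e2 : {ω | Y ω = j ∧ X ω ∈ A} = X ⁻¹' A ∩ {ω | Y ω = j} := by
          ext ω; simp only [Set.mem_setOf_eq, Set.mem_inter_iff, Set.mem_preimage]; tauto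
        rw [e1, e2] at h
        rw [smul_eq_mul]
        refine (ENNReal.toReal_eq_toReal_iff' (measure_ne_top μ _) ?_).mp ?_
        · exact ENNReal.mul_ne_top ENNReal.ofReal_ne_top (measure_ne_top μ _)
        · rw [ENNReal.toReal_mul, ENNReal.toReal_ofReal hp0]; exact h
      calc ∫ ω in {ω | Ystar ω = i ∧ Y ω = j}, U k (X ω) ∂μ
          = ∫ x, U k x ∂((μ.restrict {ω | Ystar ω = i ∧ Y ω = j}).map X) :=
            (integral_map hX.aemeasurable (hU k).aestronglyMeasurable).symm
        _ = (ENNReal.ofReal (P i j)).toReal • ∫ x, U k x ∂((μ.restrict {ω | Y ω = j}).map X) := by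
            rw [hmap, integral_smul_measure]
        _ = P i j • ∫ ω in {ω | Y ω = j}, U k (X ω) ∂μ := by
            rw [ENNReal.toReal_ofReal hp0,
              integral_map hX.aemeasurable (hU k).aestronglyMeasurable]
  -- integrability of φ i ∘ X
  have hφint : ∀ i : Fin K, Integrable (fun ω => φ i (X ω)) μ := by
    intro i
    have : Integrable (fun ω => ∑ k : Fin K, P⁻¹ k i • U k (X ω)) μ :=
      integrable_finset_sum _ (fun k _ => (hUint k).smul (P⁻¹ k i))
    exact this.congr (Filter.Eventually.of_forall fun ω => (hφ i (X ω)).symm)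
  -- pointwise decomposition of any selector-composed function
  have hdecomp : ∀ (Z : Ω → Fin K) (g : Fin K → Ω → (Fin d → ℝ)) (ω : Ω),
      g (Z ω) ω = ∑ i : Fin K, Set.indicator {ω' | Z ω' = i} (g i) ω := by
    intro Z g ω
    rw [Finset.sum_eq_single (Z ω)]
    · simp [Set.indicator_apply, Set.mem_setOf_eq]
    · intro b _ hb
      simp [Set.indicator_apply, Set.mem_setOf_eq, Ne.symm hb]
    · simp
  -- rewrite hmean as sum over j
  have hmean' : ∑ j : Fin K, ∫ ω in {ω | Y ω = j}, U j (X ω) ∂μ = 0 := by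
    rw [← hmean]
    rw [show (fun ω => U (Y ω) (X ω))
        = fun ω => ∑ j : Fin K, Set.indicator {ω' | Y ω' = j} (fun ω' => U j (X ω')) ω from
      funext fun ω => hdecomp Y (fun j ω' => U j (X ω')) ω]
    rw [integral_finset_sum _ (fun j _ => ((hUint j).indicator (hSj j)))]
    exact Finset.sum_congr rfl fun j _ => (integral_indicator (hSj j)).symm
  -- main rewriting
  have step1 : ∫ ω, φ (Ystar ω) (X ω) ∂μ
      = ∑ i : Fin K, ∫ ω in {ω | Ystar ω = i}, φ i (X ω) ∂μ := by
    rw [show (fun ω => φ (Ystar ω) (X ω))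
        = fun ω => ∑ i : Fin K, Set.indicator {ω' | Ystar ω' = i} (fun ω' => φ i (X ω')) ω from
      funext fun ω => hdecomp Ystar (fun i ω' => φ i (X ω')) ω]
    have hfs := integral_finset_sum (μ := μ) Finset.univ
      (f := fun i ω => Set.indicator {ω' | Ystar ω' = i} (fun ω' => φ i (X ω')) ω)
      (fun i _ => ((hφint i).indicator (hYstar (MeasurableSet.singleton i))))
    rw [hfs]
    exact Finset.sum_congr rfl fun i _ =>
      integral_indicator (hYstar (MeasurableSet.singleton i))
  have step2 : ∀ i : Fin K, ∫ ω in {ω | Ystar ω = i}, φ i (X ω) ∂μ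
      = ∑ j : Fin K, ∫ ω in {ω | Ystar ω = i ∧ Y ω = j}, φ i (X ω) ∂μ := by
    intro i
    have hd : ∀ ω, φ i (X ω) = ∑ j : Fin K,
        Set.indicator {ω' | Y ω' = j} (fun ω' => φ i (X ω')) ω := by
      intro ω
      exact hdecomp Y (fun _ ω' => φ i (X ω')) ω
    calc ∫ ω in {ω | Ystar ω = i}, φ i (X ω) ∂μ
        = ∫ ω in {ω | Ystar ω = i}, ∑ j : Fin K,
            Set.indicator {ω' | Y ω' = j} (fun ω' => φ i (X ω')) ω ∂μ := by
          exact integral_congr_ae (Filter.Eventually.of_forall fun ω => hd ω)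
      _ = ∑ j : Fin K, ∫ ω in {ω | Ystar ω = i},
            Set.indicator {ω' | Y ω' = j} (fun ω' => φ i (X ω')) ω ∂μ :=
          integral_finset_sum _ (fun j _ =>
            (((hφint i).indicator (hSj j)).restrict))
      _ = ∑ j : Fin K, ∫ ω in {ω | Ystar ω = i ∧ Y ω = j}, φ i (X ω) ∂μ := by
          refine Finset.sum_congr rfl fun j _ => ?_
          rw [integral_indicator (hSj j), Measure.restrict_restrict (hSj j)]
          have hset : {ω | Y ω = j} ∩ {ω | Ystar ω = i} = {ω | Ystar ω = i ∧ Y ω = j} :=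
            Set.ext fun ω => ⟨fun h => ⟨h.2, h.1⟩, fun h => ⟨h.2, h.1⟩⟩
          rw [hset]
  have step3 : ∀ i j : Fin K, ∫ ω in {ω | Ystar ω = i ∧ Y ω = j}, φ i (X ω) ∂μ
      = ∑ k : Fin K, (P⁻¹ k i * P i j) • ∫ ω in {ω | Y ω = j}, U k (X ω) ∂μ := by
    intro i j
    calc ∫ ω in {ω | Ystar ω = i ∧ Y ω = j}, φ i (X ω) ∂μ
        = ∫ ω in {ω | Ystar ω = i ∧ Y ω = j}, ∑ k : Fin K, P⁻¹ k i • U k (X ω) ∂μ :=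
          integral_congr_ae (Filter.Eventually.of_forall fun ω => hφ i (X ω))
      _ = ∑ k : Fin K, P⁻¹ k i • ∫ ω in {ω | Ystar ω = i ∧ Y ω = j}, U k (X ω) ∂μ := by
          have hfs := integral_finset_sum (μ := μ.restrict {ω | Ystar ω = i ∧ Y ω = j})
            Finset.univ (f := fun k ω => P⁻¹ k i • U k (X ω))
            (fun k _ => ((hUint k).smul (P⁻¹ k i)).restrict)
          rw [hfs]
          exact Finset.sum_congr rfl fun k _ => integral_smul _ _
      _ = ∑ k : Fin K, (P⁻¹ k i * P i j) • ∫ ω in {ω | Y ω = j}, U k (X ω) ∂μ := by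
          refine Finset.sum_congr rfl fun k _ => ?_
          rw [key i j k, smul_smul]
  -- finish with linear algebra
  rw [step1]
  simp_rw [fun i => step2 i, fun i j => step3 i j]
  rw [Finset.sum_comm]
  have : ∀ j : Fin K, ∑ i : Fin K, ∑ k : Fin K,
      (P⁻¹ k i * P i j) • ∫ ω in {ω | Y ω = j}, U k (X ω) ∂μ
      = ∫ ω in {ω | Y ω = j}, U j (X ω) ∂μ := by
    intro j
    rw [Finset.sum_comm]
    have hkj : ∀ k : Fin K, ∑ i : Fin K, (P⁻¹ k i * P i j) = if k = j then (1:ℝ) else 0 := by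
      intro k
      have := Matrix.nonsing_inv_mul P hP
      have h2 : (P⁻¹ * P) k j = if k = j then (1:ℝ) else 0 := by
        rw [this, Matrix.one_apply]
      rw [← h2, Matrix.mul_apply]
    calc ∑ k : Fin K, ∑ i : Fin K,
          (P⁻¹ k i * P i j) • ∫ ω in {ω | Y ω = j}, U k (X ω) ∂μ
        = ∑ k : Fin K, (∑ i : Fin K, P⁻¹ k i * P i j) • ∫ ω in {ω | Y ω = j}, U k (X ω) ∂μ := by
          refine Finset.sum_congr rfl fun k _ => ?_
          rw [Finset.sum_smul]
      _ = ∑ k : Fin K, (if k = j then (1:ℝ) else 0) • ∫ ω in {ω | Y ω = j}, U k (X ω) ∂μ := by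
          refine Finset.sum_congr rfl fun k _ => by rw [hkj k]
      _ = ∫ ω in {ω | Y ω = j}, U j (X ω) ∂μ := by
          simp only [ite_smul, one_smul, zero_smul, Finset.sum_ite_eq',
            Finset.mem_univ, if_true]
  calc ∑ j : Fin K, ∑ i : Fin K, ∑ k : Fin K,
        (P⁻¹ k i * P i j) • ∫ ω in {ω | Y ω = j}, U k (X ω) ∂μ
      = ∑ j : Fin K, ∫ ω in {ω | Y ω = j}, U j (X ω) ∂μ :=
        Finset.sum_congr rfl fun j _ => this j
    _ = 0 := hmean'
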